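/- For any prime p, the subgroup of SL_2(Z[1/p]) generated by the matrices A = [[1,0],[1,1]] and Q = [[1,1/p],[0,1]] equals all of SL_2(Z[1/p]). -/

import Mathlib

abbrev SL2Q := Matrix.SpecialLinearGroup (Fin 2) ℚ

/-- A = [[1,0],[1,1]] -/
def matA : SL2Q := ⟨!![1,0;1,1], by norm_num [Matrix.det_fin_two_of]⟩
/-- B = [[0,1],[-1,0]] -/
def matB : SL2Q := ⟨!![0,1;-1,0], by norm_num [Matrix.det_fin_two_of]⟩
/-- Q_q = [[1,q],[0,1]] -/
def matQ (q : ℚ) : SL2Q := ⟨!![1,q;0,1], by norm_num [Matrix.det_fin_two_of]⟩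
/-- U_p = [[p,0],[0,1/p]] -/
def matU (p : ℚ) (hp : p ≠ 0) : SL2Q := ⟨!![p,0;0,p⁻¹], by rw [Matrix.det_fin_two_of]; field_simp; simp⟩
/-- lower unipotent [[1,0],[x,1]] -/
def matL (x : ℚ) : SL2Q := ⟨!![1,0;x,1], by norm_num [Matrix.det_fin_two_of]⟩

def matD (q : ℚ) (hq : q ≠ 0) (j : ℤ) : SL2Q :=
  ⟨!![q^j, 0; 0, q^(-j)], by
    rw [Matrix.det_fin_two_of]
    rw [zpow_neg]
    field_simp; simp⟩

def negI : SL2Q := ⟨!![-1,0;0,-1], by norm_num [Matrix.det_fin_two_of]⟩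

lemma matQ_mul (x y : ℚ) : matQ x * matQ y = matQ (x + y) := by
  ext i j
  simp only [Matrix.SpecialLinearGroup.coe_mul]
  fin_cases i <;> fin_cases j <;>
    simp [matQ, Matrix.mul_apply, Fin.sum_univ_two] <;> ring

lemma matQ_zero : matQ 0 = 1 := by
  ext i j; fin_cases i <;> fin_cases j <;> simp [matQ]

lemma matQ_inv (x : ℚ) : (matQ x)⁻¹ = matQ (-x) := by
  rw [inv_eq_iff_mul_eq_one, matQ_mul, add_neg_cancel, matQ_zero]

lemma matL_mul (x y : ℚ) : matL x * matL y = matL (x + y) := by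
  ext i j
  simp only [Matrix.SpecialLinearGroup.coe_mul]
  fin_cases i <;> fin_cases j <;>
    simp [matL, Matrix.mul_apply, Fin.sum_univ_two] <;> ring

lemma matL_zero : matL 0 = 1 := by
  ext i j; fin_cases i <;> fin_cases j <;> simp [matL]

lemma matL_inv (x : ℚ) : (matL x)⁻¹ = matL (-x) := by
  rw [inv_eq_iff_mul_eq_one, matL_mul, add_neg_cancel, matL_zero]

lemma matQ_pow (x : ℚ) (n : ℕ) : matQ x ^ n = matQ (n * x) := by
  induction n with
  | zero => simp [matQ_zero]
  | succ n ih => rw [pow_succ, ih, matQ_mul]; push_cast; ring_nf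

lemma matQ_zpow (x : ℚ) (n : ℤ) : matQ x ^ n = matQ (n * x) := by
  cases n with
  | ofNat n => simpa using matQ_pow x n
  | negSucc n =>
      rw [zpow_negSucc, matQ_pow, matQ_inv]
      congr 1
      push_cast; ring

lemma matB_eq : matB = matQ 1 * matL (-1) * matQ 1 := by
  ext i j
  simp only [Matrix.SpecialLinearGroup.coe_mul]
  fin_cases i <;> fin_cases j <;>
    simp [matB, matQ, matL, Matrix.mul_apply, Fin.sum_univ_two]

def matBinv : SL2Q := ⟨!![0,-1;1,0], by norm_num [Matrix.det_fin_two_of]⟩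

lemma matB_inv : matB⁻¹ = matBinv := by
  apply inv_eq_of_mul_eq_one_right
  ext i j
  simp only [Matrix.SpecialLinearGroup.coe_mul]
  fin_cases i <;> fin_cases j <;>
    simp [matB, matBinv, Matrix.mul_apply, Fin.sum_univ_two]

lemma matB_sq : matB * matB = negI := by
  ext i j
  simp only [Matrix.SpecialLinearGroup.coe_mul]
  fin_cases i <;> fin_cases j <;>
    simp [matB, negI, Matrix.mul_apply, Fin.sum_univ_two]

lemma matU_eq (q : ℚ) (hq : q ≠ 0) :
    matU q hq = matQ q * matL (-q⁻¹) * matQ q * matB⁻¹ := by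
  rw [matB_inv]
  ext i j
  simp only [Matrix.SpecialLinearGroup.coe_mul]
  fin_cases i <;> fin_cases j <;>
    simp [matU, matQ, matL, matBinv, Matrix.mul_apply, Fin.sum_univ_two] <;> field_simp <;> norm_num

lemma matU_conj (q : ℚ) (hq : q ≠ 0) (x : ℚ) :
    matU q hq * matQ x * (matU q hq)⁻¹ = matQ (q^2 * x) := by
  rw [eq_comm, eq_comm, mul_inv_eq_iff_eq_mul]
  ext i j
  simp only [Matrix.SpecialLinearGroup.coe_mul]
  fin_cases i <;> fin_cases j <;>
    simp [matU, matQ, Matrix.mul_apply, Fin.sum_univ_two] <;> field_simp <;> ring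

lemma matB_conj_Q (x : ℚ) : matB * matQ x * matB⁻¹ = matL (-x) := by
  rw [matB_inv]
  ext i j
  simp only [Matrix.SpecialLinearGroup.coe_mul]
  fin_cases i <;> fin_cases j <;>
    simp [matB, matQ, matL, matBinv, Matrix.mul_apply, Fin.sum_univ_two]

lemma matD_mul (q : ℚ) (hq : q ≠ 0) (j k : ℤ) :
    matD q hq j * matD q hq k = matD q hq (j + k) := by
  ext i l
  simp only [Matrix.SpecialLinearGroup.coe_mul]
  fin_cases i <;> fin_cases l <;>
    simp [matD, Matrix.mul_apply, Fin.sum_univ_two, zpow_add₀ hq] <;> ring_nf <;>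
    simp [zpow_add₀ hq]

lemma matD_zero (q : ℚ) (hq : q ≠ 0) : matD q hq 0 = 1 := by
  ext i j; fin_cases i <;> fin_cases j <;> simp [matD]

lemma matD_one (q : ℚ) (hq : q ≠ 0) : matD q hq 1 = matU q hq := by
  ext i j; fin_cases i <;> fin_cases j <;> simp [matD, matU]

lemma matD_inv (q : ℚ) (hq : q ≠ 0) (j : ℤ) : (matD q hq j)⁻¹ = matD q hq (-j) := by
  rw [inv_eq_iff_mul_eq_one, matD_mul, add_neg_cancel, matD_zero]

lemma matU_zpow (q : ℚ) (hq : q ≠ 0) (j : ℤ) : (matU q hq) ^ j = matD q hq j := by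
  induction j using Int.induction_on with
  | zero => simp [matD_zero]
  | succ n ih => rw [zpow_add_one, ih, ← matD_one q hq, matD_mul]
  | pred n ih => rw [zpow_sub_one, ih, ← matD_one q hq, matD_inv, matD_mul]; ring_nf

lemma matL_pow (x : ℚ) (n : ℕ) : matL x ^ n = matL (n * x) := by
  induction n with
  | zero => simp [matL_zero]
  | succ n ih => rw [pow_succ, ih, matL_mul]; push_cast; ring_nf

lemma matL_zpow (x : ℚ) (n : ℤ) : matL x ^ n = matL (n * x) := by
  cases n with
  | ofNat n => simpa using matL_pow x n
  | negSucc n =>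
      rw [zpow_negSucc, matL_pow, matL_inv]
      congr 1
      push_cast; ring

lemma matA_eq : matA = matL 1 := by
  ext i j; fin_cases i <;> fin_cases j <;> simp [matA, matL]

def Rmem (p : ℕ) (x : ℚ) : Prop := ∃ a : ℤ, ∃ n : ℕ, x = (a : ℚ) / (p:ℚ)^n

lemma r_int (p : ℕ) (a : ℤ) : Rmem p (a : ℚ) := ⟨a, 0, by simp⟩

lemma r_neg {p : ℕ} {x : ℚ} : Rmem p x → Rmem p (-x) := by
  rintro ⟨a, n, rfl⟩; exact ⟨-a, n, by push_cast; ring⟩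

lemma r_add {p : ℕ} (hp0 : (p:ℚ) ≠ 0) {x y : ℚ} : Rmem p x → Rmem p y → Rmem p (x + y) := by
  rintro ⟨a, n, rfl⟩ ⟨b, m, rfl⟩
  refine ⟨a * p^m + b * p^n, n + m, ?_⟩
  have h1 : (p:ℚ)^n ≠ 0 := pow_ne_zero _ hp0
  have h2 : (p:ℚ)^m ≠ 0 := pow_ne_zero _ hp0
  field_simp
  push_cast
  try ring
  try tauto

lemma r_mul {p : ℕ} {x y : ℚ} : Rmem p x → Rmem p y → Rmem p (x * y) := by
  rintro ⟨a, n, rfl⟩ ⟨b, m, rfl⟩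
  refine ⟨a * b, n + m, ?_⟩
  push_cast [pow_add]
  rw [div_mul_div_comm]

lemma r_pmul {p : ℕ} (hp0 : (p:ℚ) ≠ 0) {x : ℚ} (j : ℤ) :
    Rmem p x → Rmem p (x * (p:ℚ)^j) := by
  rintro ⟨a, n, rfl⟩
  cases j with
  | ofNat k =>
      refine ⟨a * p^k, n, ?_⟩
      simp only [Int.ofNat_eq_coe, zpow_natCast]
      push_cast
      ring
  | negSucc k =>
      refine ⟨a, n + (k+1), ?_⟩
      have h1 : (p:ℚ)^n ≠ 0 := pow_ne_zero _ hp0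
      rw [zpow_negSucc, pow_add]
      field_simp
      try left
      try ring

theorem stmt3 (p : ℕ) (hp : p.Prime) :
    ∀ M : SL2Q, M ∈ Subgroup.closure {matA, matQ (1/p)} ↔
      (∀ i j, ∃ a : ℤ, ∃ n : ℕ, (M : Matrix (Fin 2) (Fin 2) ℚ) i j = (a : ℚ) / (p:ℚ)^n) := by
  have hp0 : (p:ℚ) ≠ 0 := Nat.cast_ne_zero.mpr hp.ne_zero
  set G := Subgroup.closure {matA, matQ (1/(p:ℚ))} with hG
  let S : Subgroup SL2Q :=
  { carrier := {M : SL2Q | ∀ i j, Rmem p ((M : Matrix (Fin 2) (Fin 2) ℚ) i j)}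
    one_mem' := by
      intro i j
      fin_cases i <;> fin_cases j
      · exact ⟨1, 0, by norm_num⟩
      · exact ⟨0, 0, by norm_num⟩
      · exact ⟨0, 0, by norm_num⟩
      · exact ⟨1, 0, by norm_num⟩
    mul_mem' := by
      intro a b ha hb i j
      have h : ((a * b : SL2Q) : Matrix (Fin 2) (Fin 2) ℚ) i j
          = (a : Matrix (Fin 2) (Fin 2) ℚ) i 0 * (b : Matrix (Fin 2) (Fin 2) ℚ) 0 j
            + (a : Matrix (Fin 2) (Fin 2) ℚ) i 1 * (b : Matrix (Fin 2) (Fin 2) ℚ) 1 j := by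
        simp [Matrix.mul_apply, Fin.sum_univ_two]
      rw [h]
      exact r_add hp0 (r_mul (ha i 0) (hb 0 j)) (r_mul (ha i 1) (hb 1 j))
    inv_mem' := by
      intro a ha i j
      rw [Matrix.SpecialLinearGroup.SL2_inv_expl]
      fin_cases i <;> fin_cases j
      · simpa using ha 1 1
      · simpa using r_neg (ha 0 1)
      · simpa using r_neg (ha 1 0)
      · simpa using ha 0 0 }
  have hGleS : G ≤ S := by
    rw [hG, Subgroup.closure_le]
    rintro x hx
    simp only [Set.mem_insert_iff, Set.mem_singleton_iff] at hx
    rcases hx with rfl | rfl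
    · intro i j
      fin_cases i <;> fin_cases j
      · exact ⟨1, 0, by norm_num [matA]⟩
      · exact ⟨0, 0, by norm_num [matA]⟩
      · exact ⟨1, 0, by norm_num [matA]⟩
      · exact ⟨1, 0, by norm_num [matA]⟩
    · intro i j
      fin_cases i <;> fin_cases j
      · exact ⟨1, 0, by norm_num [matQ]⟩
      · exact ⟨1, 1, by norm_num [matQ]⟩
      · exact ⟨0, 0, by norm_num [matQ]⟩
      · exact ⟨1, 0, by norm_num [matQ]⟩
  have hgen1 : matA ∈ G := Subgroup.subset_closure (Set.mem_insert _ _)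
  have hgen2 : matQ (1/(p:ℚ)) ∈ G := Subgroup.subset_closure (Set.mem_insert_of_mem _ rfl)
  have hLint : ∀ a : ℤ, matL (a:ℚ) ∈ G := by
    intro a
    have h : matL (a:ℚ) = matA ^ a := by rw [matA_eq, matL_zpow, mul_one]
    rw [h]; exact zpow_mem hgen1 a
  have hQ1 : matQ 1 ∈ G := by
    have h : matQ 1 = matQ (1/(p:ℚ)) ^ (p:ℕ) := by rw [matQ_pow]; congr 1; field_simp
    rw [h]; exact pow_mem hgen2 p
  have hB : matB ∈ G := by
    rw [matB_eq]
    refine mul_mem (mul_mem hQ1 ?_) hQ1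
    have := hLint (-1); push_cast at this; exact this
  have hLneg : ∀ x : ℚ, matQ x ∈ G → matL (-x) ∈ G := by
    intro x hx
    rw [← matB_conj_Q]
    exact mul_mem (mul_mem hB hx) (inv_mem hB)
  have hpinv0 : ((p:ℚ)⁻¹) ≠ 0 := inv_ne_zero hp0
  have hU : matU ((p:ℚ)⁻¹) hpinv0 ∈ G := by
    rw [matU_eq]
    refine mul_mem (mul_mem (mul_mem ?_ ?_) ?_) (inv_mem hB)
    · simpa [one_div] using hgen2
    · have h : (-((p:ℚ)⁻¹)⁻¹) = ((-(p:ℤ)):ℚ) := by push_cast; simp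
      rw [h]; exact hLint _
    · simpa [one_div] using hgen2
  have hQbase : ∀ n : ℕ, matQ (1/(p:ℚ)^n) ∈ G := by
    intro n
    induction n using Nat.strong_induction_on with
    | _ n ih =>
      match n with
      | 0 => simpa using hQ1
      | 1 => simpa using hgen2
      | (n+2) =>
        have h := mul_mem (mul_mem hU (ih n (by omega))) (inv_mem hU)
        rw [matU_conj] at h
        have he : ((p:ℚ)⁻¹)^2 * (1/(p:ℚ)^n) = 1/(p:ℚ)^(n+2) := by
          field_simp
          ring
        rwa [he] at h
  have hQG : ∀ x : ℚ, Rmem p x → matQ x ∈ G := by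
    rintro x ⟨a, n, rfl⟩
    have h : matQ ((a:ℚ)/(p:ℚ)^n) = matQ (1/(p:ℚ)^n) ^ a := by
      rw [matQ_zpow, mul_one_div]
    rw [h]; exact zpow_mem (hQbase n) a
  have hLG : ∀ x : ℚ, Rmem p x → matL x ∈ G := by
    intro x hx
    have := hLneg (-x) (hQG _ (r_neg hx))
    simpa using this
  have hUp : matU (p:ℚ) hp0 ∈ G := by
    rw [matU_eq]
    refine mul_mem (mul_mem (mul_mem ?_ ?_) ?_) (inv_mem hB)
    · exact hQG _ ⟨p, 0, by push_cast; norm_num⟩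
    · exact hLG _ ⟨-1, 1, by push_cast; ring⟩
    · exact hQG _ ⟨p, 0, by push_cast; norm_num⟩
  have hD : ∀ j : ℤ, matD (p:ℚ) hp0 j ∈ G := by
    intro j
    rw [← matU_zpow]
    exact zpow_mem hUp j
  have key : ∀ k : ℕ, ∀ M : SL2Q, (∀ i j, Rmem p ((M : Matrix (Fin 2) (Fin 2) ℚ) i j)) →
      (∃ m : ℤ, ∃ n : ℕ, (M : Matrix (Fin 2) (Fin 2) ℚ) 1 0 = (m:ℚ)/(p:ℚ)^n ∧ m.natAbs ≤ k) →
      M ∈ G := by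
    intro k
    induction k using Nat.strong_induction_on with
    | _ k ih =>
    rintro M hMS ⟨m, n, hc, hk⟩
    by_cases hc0 : (M : Matrix (Fin 2) (Fin 2) ℚ) 1 0 = 0
    · -- upper triangular case
      obtain ⟨u, s, ha⟩ := hMS 0 0
      obtain ⟨v, e, hd⟩ := hMS 1 1
      have hdet := M.prop
      rw [Matrix.det_fin_two] at hdet
      have had : (M : Matrix (Fin 2) (Fin 2) ℚ) 0 0 * (M : Matrix (Fin 2) (Fin 2) ℚ) 1 1 = 1 := by
        rw [hc0] at hdet; linarith [hdet]
      have huv : u * v = (p:ℤ)^(s+e) := by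
        have h1 : (u:ℚ) * v = (p:ℚ)^(s+e) := by
          have h2 := had
          rw [ha, hd] at h2
          have h3 : (p:ℚ)^s ≠ 0 := pow_ne_zero _ hp0
          have h4 : (p:ℚ)^e ≠ 0 := pow_ne_zero _ hp0
          field_simp at h2
          rw [pow_add]
          linarith [h2]
        exact_mod_cast h1
      have hdvd : u.natAbs ∣ p^(s+e) := by
        have h5 : u.natAbs * v.natAbs = p^(s+e) := by
          have := congrArg Int.natAbs huv
          simpa [Int.natAbs_mul, Int.natAbs_pow] using this
        exact ⟨v.natAbs, h5.symm⟩
      obtain ⟨kk, hkkle, hu⟩ := (Nat.dvd_prime_pow hp).mp hdvd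
      have hane : (M : Matrix (Fin 2) (Fin 2) ℚ) 0 0 ≠ 0 := by
        intro h; rw [h] at had; simp at had
      have hdinv : (M : Matrix (Fin 2) (Fin 2) ℚ) 1 1
          = ((M : Matrix (Fin 2) (Fin 2) ℚ) 0 0)⁻¹ :=
        (inv_eq_of_mul_eq_one_right had).symm
      have hppow : ((u.natAbs : ℤ) : ℚ) = (p:ℚ)^(kk:ℕ) := by
        rw [hu]; push_cast; ring
      rcases Int.natAbs_eq u with h1 | h1
      · -- u = natAbs, a = p^j
        have hav : (M : Matrix (Fin 2) (Fin 2) ℚ) 0 0 = (p:ℚ)^((kk:ℤ) - s) := by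
          rw [ha, h1, hppow, zpow_sub₀ hp0, zpow_natCast, zpow_natCast]
        have hdv : (M : Matrix (Fin 2) (Fin 2) ℚ) 1 1 = (p:ℚ)^(-((kk:ℤ) - s)) := by
          rw [hdinv, hav, ← zpow_neg]
        set jj : ℤ := (kk:ℤ) - s with hjj
        have hMeq : M = matD (p:ℚ) hp0 jj * matQ ((M : Matrix (Fin 2) (Fin 2) ℚ) 0 1 * (p:ℚ)^(-jj)) := by
          ext i j
          simp only [Matrix.SpecialLinearGroup.coe_mul]
          fin_cases i <;> fin_cases j
          · simpa [matD, matQ, Matrix.mul_apply, Fin.sum_univ_two] using hav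
          · simp [matD, matQ, Matrix.mul_apply, Fin.sum_univ_two]
            rw [mul_comm ((p:ℚ)^jj), mul_assoc, inv_mul_cancel₀ (zpow_ne_zero _ hp0), mul_one]
          · simpa [matD, matQ, Matrix.mul_apply, Fin.sum_univ_two] using hc0
          · simpa [matD, matQ, Matrix.mul_apply, Fin.sum_univ_two] using hdv
        rw [hMeq]
        exact mul_mem (hD jj) (hQG _ (r_pmul hp0 (-jj) (hMS 0 1)))
      · -- u = -natAbs, a = -p^j
        have hav : (M : Matrix (Fin 2) (Fin 2) ℚ) 0 0 = -(p:ℚ)^((kk:ℤ) - s) := by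
          rw [ha, h1, Int.cast_neg, hppow, zpow_sub₀ hp0, zpow_natCast, zpow_natCast]
          ring
        have hdv : (M : Matrix (Fin 2) (Fin 2) ℚ) 1 1 = -(p:ℚ)^(-((kk:ℤ) - s)) := by
          rw [hdinv, hav, inv_neg, zpow_neg]
        set jj : ℤ := (kk:ℤ) - s with hjj
        have hMeq : M = (matB * matB) * (matD (p:ℚ) hp0 jj
            * matQ (-(M : Matrix (Fin 2) (Fin 2) ℚ) 0 1 * (p:ℚ)^(-jj))) := by
          rw [matB_sq]
          ext i j
          simp only [Matrix.SpecialLinearGroup.coe_mul]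
          fin_cases i <;> fin_cases j
          · simpa [negI, matD, matQ, Matrix.mul_apply, Fin.sum_univ_two] using hav
          · simp [negI, matD, matQ, Matrix.mul_apply, Fin.sum_univ_two]
            rw [mul_comm ((p:ℚ)^jj), mul_assoc, inv_mul_cancel₀ (zpow_ne_zero _ hp0), mul_one]
          · simpa [negI, matD, matQ, Matrix.mul_apply, Fin.sum_univ_two] using hc0
          · simpa [negI, matD, matQ, Matrix.mul_apply, Fin.sum_univ_two] using hdv
        rw [hMeq]
        exact mul_mem (mul_mem hB hB)
          (mul_mem (hD jj) (hQG _ (r_pmul hp0 (-jj) (r_neg (hMS 0 1)))))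
    · -- Euclidean step
      have hmne : m ≠ 0 := by
        intro h; apply hc0; rw [hc, h]; simp
      obtain ⟨u, s, ha⟩ := hMS 0 0
      have hmb0 : (0:ℤ) < (m.natAbs : ℤ) := by
        exact_mod_cast Int.natAbs_pos.mpr hmne
      set q : ℤ := (u * (p:ℤ)^n) / (m.natAbs : ℤ) with hq
      set r : ℤ := (u * (p:ℤ)^n) % (m.natAbs : ℤ) with hr
      have hqr : (m.natAbs : ℤ) * q + r = u * (p:ℤ)^n := Int.mul_ediv_add_emod _ _
      have hr0 : 0 ≤ r := Int.emod_nonneg _ (ne_of_gt hmb0)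
      have hrlt : r < (m.natAbs : ℤ) := Int.emod_lt_of_pos _ hmb0
      set z : ℤ := -(q * m.sign) with hz
      have hsgn : m.sign * m = (m.natAbs : ℤ) := by
        rcases lt_trichotomy m 0 with h | h | h
        · rw [Int.sign_eq_neg_one_of_neg h]; omega
        · exact absurd h hmne
        · rw [Int.sign_eq_one_of_pos h]; omega
      have hzm : z * m = -(q * (m.natAbs : ℤ)) := by
        rw [hz, ← hsgn]; ring
      have hint : u * (p:ℤ)^n + z * m = r := by
        rw [hzm]; linarith [hqr]
      set t : ℚ := (z:ℚ) / (p:ℚ)^s with ht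
      have hQt : matQ t ∈ G := hQG t ⟨z, s, rfl⟩
      set M' : SL2Q := matB * matQ t * M with hM'
      have hM'S : ∀ i j, Rmem p ((M' : Matrix (Fin 2) (Fin 2) ℚ) i j) :=
        S.mul_mem (S.mul_mem (hGleS hB) (hGleS hQt)) hMS
      have hentry : (M' : Matrix (Fin 2) (Fin 2) ℚ) 1 0 = ((-r : ℤ):ℚ)/(p:ℚ)^(n+s) := by
        have hcalc : (M' : Matrix (Fin 2) (Fin 2) ℚ) 1 0
            = -((M : Matrix (Fin 2) (Fin 2) ℚ) 0 0) - t * ((M : Matrix (Fin 2) (Fin 2) ℚ) 1 0) := by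
          simp only [hM', Matrix.SpecialLinearGroup.coe_mul]
          simp [hM', matB, matQ, Matrix.mul_apply, Fin.sum_univ_two]
          ring
        rw [hcalc, ha, hc, ht]
        have hQint : (u:ℚ) * (p:ℚ)^n + (z:ℚ) * (m:ℚ) = (r:ℚ) := by exact_mod_cast hint
        have h3 : (p:ℚ)^s ≠ 0 := pow_ne_zero _ hp0
        have h4 : (p:ℚ)^n ≠ 0 := pow_ne_zero _ hp0
        field_simp
        push_cast at hQint ⊢
        linear_combination (-((p:ℚ)^s * (p:ℚ)^n)) * hQint
      have hrnat : r.natAbs < m.natAbs := by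
        have h5 : (r.natAbs : ℤ) < (m.natAbs : ℤ) := by
          rw [Int.natAbs_of_nonneg hr0]; exact hrlt
        exact_mod_cast h5
      have hM'G : M' ∈ G := ih r.natAbs (lt_of_lt_of_le hrnat hk) M' hM'S
        ⟨-r, n+s, hentry, by simp [Int.natAbs_neg]⟩
      have hMfin : M = (matB * matQ t)⁻¹ * M' := by
        rw [hM', ← mul_assoc]
        group
      rw [hMfin]
      exact mul_mem (inv_mem (mul_mem hB hQt)) hM'G
  intro M
  constructor
  · intro h
    exact fun i j => hGleS h i j
  · intro h
    obtain ⟨m, n, hmn⟩ := h 1 0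
    exact key m.natAbs M h ⟨m, n, hmn, le_refl _⟩
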